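/- Let k be a field and (C, Δ, ε) any counital coassociative k-coalgebra. Then for every n ≥ 0 the matching map σ : coTHH^n(C) = C^{⊗(n+1)} → M_n(coTHH^•(C)), y ↦ (σ_0(y),…,σ_{n-1}(y)), is surjective; in other words, the cosimplicial cyclic cobar construction of any counital coalgebra over a field has surjective matching maps (it is Reedy fibrant). -/

import Mathlib

open scoped TensorProduct

noncomputable section

namespace CoTHH

set_option linter.unusedSectionVars false

variable {k : Type*} [CommRing k] {C : Type*} [AddCommGroup C] [Module k C]

private lemma update_succAbove_self {n : ℕ} [DecidableEq (Fin (n + 1))] (c : Fin (n + 1) → C) (p : Fin (n + 1)) (v : C) :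
    (fun j => Function.update c p v (p.succAbove j)) = fun j => c (p.succAbove j) := by
  funext j
  exact Function.update_of_ne (Fin.succAbove_ne p j) _ _

private lemma update_succAbove_other {n : ℕ} [DecidableEq (Fin (n + 1))] [DecidableEq (Fin n)] (c : Fin (n + 1) → C) (p : Fin (n + 1))
    (j₀ : Fin n) (v : C) :
    (fun j => Function.update c (p.succAbove j₀) v (p.succAbove j)) =
      Function.update (fun j => c (p.succAbove j)) j₀ v := by
  funext j
  rcases eq_or_ne j j₀ with rfl | hj
  · simp
  · rw [Function.update_of_ne (Fin.succAbove_right_injective.ne hj),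
      Function.update_of_ne hj]

/-- The codegeneracy-type operator on tensor powers: given a linear functional
`ε : C → k`, the map `id^{⊗p} ⊗ ε ⊗ id^{⊗(n-p)} : C^{⊗(n+1)} → C^{⊗n}` applying `ε`
in the `p`-th tensor factor (and deleting that factor). -/
def epsAt (ε : C →ₗ[k] k) (n : ℕ) (p : Fin (n + 1)) :
    (⨂[k] (_ : Fin (n + 1)), C) →ₗ[k] ⨂[k] (_ : Fin n), C :=
  PiTensorProduct.lift
    { toFun := fun c => ε (c p) • PiTensorProduct.tprod k (fun j => c (p.succAbove j))
      map_update_add' := by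
        intro _ c m x y
        try dsimp only
        rcases eq_or_ne m p with rfl | hmp
        · rw [update_succAbove_self, update_succAbove_self, update_succAbove_self]
          simp [add_smul]
        · obtain ⟨j₀, rfl⟩ := Fin.exists_succAbove_eq hmp
          rw [update_succAbove_other, update_succAbove_other, update_succAbove_other]
          simp only [Function.update_of_ne (Fin.ne_succAbove p j₀)]
          rw [MultilinearMap.map_update_add, smul_add]
      map_update_smul' := by
        intro _ c m s x
        try dsimp only
        rcases eq_or_ne m p with rfl | hmp
        · rw [update_succAbove_self, update_succAbove_self]
          simp [mul_smul]
        · obtain ⟨j₀, rfl⟩ := Fin.exists_succAbove_eq hmp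
          rw [update_succAbove_other, update_succAbove_other]
          simp only [Function.update_of_ne (Fin.ne_succAbove p j₀)]
          rw [MultilinearMap.map_update_smul, smul_comm] }

/-- The codegeneracy operators with uniform indexing: `epsAt' ε n p : C^{⊗n} → C^{⊗(n-1)}`
applies `ε` in the `p`-th factor.  In particular `σ_i : C^{⊗(m+2)} → C^{⊗(m+1)}`
(the `i`-th codegeneracy `id^{⊗(i+1)} ⊗ ε ⊗ id^{⊗(m-i)}` of `coTHH^•(C)` at level `m+1`)
is `epsAt' ε (m+2) (i+1)`. -/
def epsAt' (ε : C →ₗ[k] k) : ∀ (n : ℕ), Fin n → ((⨂[k] (_ : Fin n), C) →ₗ[k] ⨂[k] (_ : Fin (n - 1)), C)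
  | n + 1, p => epsAt ε n p


-- Auxiliary development


open PiTensorProduct

set_option linter.unusedSectionVars false

variable {k : Type*} [CommRing k] {C : Type*} [AddCommGroup C] [Module k C]

private lemma succAbove_cases {n : ℕ} (t : Fin (n + 1)) (j : Fin n) :
    ((t.succAbove j).val = j.val ∧ j.val < t.val) ∨
      ((t.succAbove j).val = j.val + 1 ∧ t.val ≤ j.val) := by
  rcases Nat.lt_or_ge j.val t.val with h | h
  · exact Or.inl ⟨by rw [Fin.succAbove_of_castSucc_lt _ _ (by simpa [Fin.lt_def] using h)]; rfl, h⟩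
  · exact Or.inr ⟨by rw [Fin.succAbove_of_le_castSucc _ _ (by simpa [Fin.le_def] using h)]; rfl, h⟩

private lemma predAbove_cases {n : ℕ} (p : Fin n) (j : Fin (n + 1)) :
    ((p.predAbove j).val = j.val - 1 ∧ p.val < j.val) ∨
      ((p.predAbove j).val = j.val ∧ j.val ≤ p.val) := by
  rcases Nat.lt_or_ge p.val j.val with h | h
  · exact Or.inl ⟨by rw [Fin.predAbove_of_castSucc_lt _ _ (by simpa [Fin.lt_def] using h)]; rfl, h⟩
  · exact Or.inr ⟨by rw [Fin.predAbove_of_le_castSucc _ _ (by simpa [Fin.le_def] using h)]; rfl, h⟩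

variable {n : ℕ}

/-- Insert `u, v` at positions `p, p+1`, keeping the other coordinates of `c`. -/
private def ins (p : Fin n) (c : Fin n → C) (u v : C) : Fin (n + 1) → C :=
  Function.update (Function.update (fun j => c (p.predAbove j)) p.succ v) p.castSucc u

private lemma ins_self {p : Fin n} {c : Fin n → C} {u v : C} {j : Fin (n + 1)}
    (h : j.val = p.val) : ins p c u v j = u := by
  obtain rfl : j = p.castSucc := Fin.ext (show j.val = p.val from h)
  simp [ins]

private lemma ins_succ {p : Fin n} {c : Fin n → C} {u v : C} {j : Fin (n + 1)}
    (h : j.val = p.val + 1) : ins p c u v j = v := by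
  obtain rfl : j = p.succ := Fin.ext (show j.val = p.val + 1 from h)
  rw [ins, Function.update_of_ne (Fin.ne_of_val_ne (show p.val + 1 ≠ p.val by omega)),
    Function.update_self]

private lemma ins_lt {p : Fin n} {c : Fin n → C} {u v : C} {j : Fin (n + 1)}
    (h : j.val < p.val) (i : Fin n) (hi : i.val = j.val) : ins p c u v j = c i := by
  rw [ins, Function.update_of_ne (Fin.ne_of_val_ne (show j.val ≠ p.val by omega)),
    Function.update_of_ne (Fin.ne_of_val_ne (show j.val ≠ p.val + 1 by omega))]
  congr 1
  rcases predAbove_cases p j with ⟨h1, h2⟩ | ⟨h1, h2⟩ <;> exact Fin.ext (by omega)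

private lemma ins_gt {p : Fin n} {c : Fin n → C} {u v : C} {j : Fin (n + 1)}
    (h : p.val + 1 < j.val) (i : Fin n) (hi : i.val + 1 = j.val) : ins p c u v j = c i := by
  rw [ins, Function.update_of_ne (Fin.ne_of_val_ne (show j.val ≠ p.val by omega)),
    Function.update_of_ne (Fin.ne_of_val_ne (show j.val ≠ p.val + 1 by omega))]
  congr 1
  rcases predAbove_cases p j with ⟨h1, h2⟩ | ⟨h1, h2⟩ <;> exact Fin.ext (by omega)

private lemma ins_update_self [DecidableEq (Fin n)] (p : Fin n) (c : Fin n → C) (x u v : C) :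
    ins p (Function.update c p x) u v = ins p c u v := by
  funext j
  have hjb := j.isLt
  obtain h | h | h | h :
      j.val < p.val ∨ j.val = p.val ∨ j.val = p.val + 1 ∨ p.val + 1 < j.val := by omega
  · have hjn : j.val < n := by omega
    set i : Fin n := ⟨j.val, hjn⟩ with hidef
    have hiv : i.val = j.val := rfl
    rw [ins_lt h i rfl, ins_lt h i rfl,
      Function.update_of_ne (Fin.ne_of_val_ne (show i.val ≠ p.val by omega))]
  · rw [ins_self h, ins_self h]
  · rw [ins_succ h, ins_succ h]
  · have hjn : j.val - 1 < n := by omega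
    set i : Fin n := ⟨j.val - 1, hjn⟩ with hidef
    have hiv : i.val = j.val - 1 := rfl
    rw [ins_gt h i (by omega), ins_gt h i (by omega),
      Function.update_of_ne (Fin.ne_of_val_ne (show i.val ≠ p.val by omega))]

private lemma ins_update_other [DecidableEq (Fin n)] (p m : Fin n) (hm : m ≠ p)
    (c : Fin n → C) (x u v : C) :
    ins p (Function.update c m x) u v =
      Function.update (ins p c u v) (p.castSucc.succAbove m) x := by
  have hmp : m.val ≠ p.val := fun e => hm (Fin.ext e)
  have hjm := succAbove_cases p.castSucc m
  have hcs : (p.castSucc : Fin (n + 1)).val = p.val := rfl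
  set jm := p.castSucc.succAbove m with hjmdef
  funext j
  have hjb := j.isLt
  rcases eq_or_ne j jm with rfl | hj
  · rw [Function.update_self]
    rcases hjm with ⟨h1, h2⟩ | ⟨h1, h2⟩
    · rw [ins_lt (show jm.val < p.val by omega) m (by omega), Function.update_self]
    · rw [ins_gt (show p.val + 1 < jm.val by omega) m (by omega), Function.update_self]
  · rw [Function.update_of_ne hj]
    have hjv : j.val ≠ jm.val := fun e => hj (Fin.ext e)
    rcases hjm with ⟨h1, h2⟩ | ⟨h1, h2⟩
    all_goals
      obtain h | h | h | h :
        j.val < p.val ∨ j.val = p.val ∨ j.val = p.val + 1 ∨ p.val + 1 < j.val := by omega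
    · have hjn : j.val < n := by omega
      set i : Fin n := ⟨j.val, hjn⟩ with hidef
      have hiv : i.val = j.val := rfl
      rw [ins_lt h i rfl, ins_lt h i rfl,
        Function.update_of_ne (Fin.ne_of_val_ne (show i.val ≠ m.val by omega))]
    · rw [ins_self h, ins_self h]
    · rw [ins_succ h, ins_succ h]
    · have hjn : j.val - 1 < n := by omega
      set i : Fin n := ⟨j.val - 1, hjn⟩ with hidef
      have hiv : i.val = j.val - 1 := rfl
      rw [ins_gt h i (by omega), ins_gt h i (by omega),
        Function.update_of_ne (Fin.ne_of_val_ne (show i.val ≠ m.val by omega))]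
    · have hjn : j.val < n := by omega
      set i : Fin n := ⟨j.val, hjn⟩ with hidef
      have hiv : i.val = j.val := rfl
      rw [ins_lt h i rfl, ins_lt h i rfl,
        Function.update_of_ne (Fin.ne_of_val_ne (show i.val ≠ m.val by omega))]
    · rw [ins_self h, ins_self h]
    · rw [ins_succ h, ins_succ h]
    · have hjn : j.val - 1 < n := by omega
      set i : Fin n := ⟨j.val - 1, hjn⟩ with hidef
      have hiv : i.val = j.val - 1 := rfl
      rw [ins_gt h i (by omega), ins_gt h i (by omega),
        Function.update_of_ne (Fin.ne_of_val_ne (show i.val ≠ m.val by omega))]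

private lemma ins_swap (p : Fin n) (c : Fin n → C) (u v : C) :
    ins p c u v = Function.update
      (Function.update (fun j => c (p.predAbove j)) p.castSucc u) p.succ v := by
  unfold ins
  exact Function.update_comm (β := fun _ : Fin (n+1) => C) (Fin.castSucc_lt_succ (i := p)).ne' v u _

private def insBil (p : Fin n) (c : Fin n → C) :
    C →ₗ[k] C →ₗ[k] ⨂[k] (_ : Fin (n + 1)), C :=
  LinearMap.mk₂ k (fun u v => PiTensorProduct.tprod k (ins p c u v))
    (fun u u' v =>
      (PiTensorProduct.tprod k).map_update_add
        (Function.update (fun j => c (p.predAbove j)) p.succ v) p.castSucc u u')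
    (fun s u v =>
      (PiTensorProduct.tprod k).map_update_smul
        (Function.update (fun j => c (p.predAbove j)) p.succ v) p.castSucc s u)
    (fun u v v' => by
      simp only [ins_swap]
      exact (PiTensorProduct.tprod k).map_update_add
        (Function.update (fun j => c (p.predAbove j)) p.castSucc u) p.succ v v')
    (fun s u v => by
      simp only [ins_swap]
      exact (PiTensorProduct.tprod k).map_update_smul
        (Function.update (fun j => c (p.predAbove j)) p.castSucc u) p.succ s v)

private lemma insBil_apply (p : Fin n) (c : Fin n → C) (u v : C) :
    insBil (k := k) p c u v = PiTensorProduct.tprod k (ins p c u v) := rfl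

private def deltaMulti (Δ : C →ₗ[k] C ⊗[k] C) (p : Fin n) :
    MultilinearMap k (fun _ : Fin n => C) (⨂[k] (_ : Fin (n + 1)), C) where
  toFun c := TensorProduct.lift (insBil p c) (Δ (c p))
  map_update_add' := by
    intro _ c m x y
    rcases eq_or_ne m p with rfl | hmp
    · have key : ∀ z : C, insBil (k := k) m (Function.update c m z) = insBil m c := by
        intro z
        refine LinearMap.ext fun u => LinearMap.ext fun v => ?_
        simp only [insBil_apply, ins_update_self]
      simp only [key, Function.update_self, map_add, LinearMap.add_apply]
    · have key : TensorProduct.lift (insBil (k := k) p (Function.update c m (x + y))) =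
          TensorProduct.lift (insBil p (Function.update c m x)) +
            TensorProduct.lift (insBil p (Function.update c m y)) := by
        refine TensorProduct.ext' fun u v => ?_
        simp only [TensorProduct.lift.tmul, LinearMap.add_apply, insBil_apply,
          ins_update_other p m hmp, MultilinearMap.map_update_add]
      simp only [Function.update_of_ne hmp.symm, key, LinearMap.add_apply]
  map_update_smul' := by
    intro _ c m s x
    rcases eq_or_ne m p with rfl | hmp
    · have key : ∀ z : C, insBil (k := k) m (Function.update c m z) = insBil m c := by
        intro z
        refine LinearMap.ext fun u => LinearMap.ext fun v => ?_
        simp only [insBil_apply, ins_update_self]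
      simp only [key, Function.update_self, map_smul, LinearMap.smul_apply]
    · have key : TensorProduct.lift (insBil (k := k) p (Function.update c m (s • x))) =
          s • TensorProduct.lift (insBil p (Function.update c m x)) := by
        refine TensorProduct.ext' fun u v => ?_
        simp only [TensorProduct.lift.tmul, LinearMap.smul_apply, insBil_apply,
          ins_update_other p m hmp, MultilinearMap.map_update_smul]
      simp only [Function.update_of_ne hmp.symm, key, LinearMap.smul_apply]

/-- `Δ` applied in the `p`-th factor: `C^{⊗ n} → C^{⊗(n+1)}`. -/
def deltaAt (Δ : C →ₗ[k] C ⊗[k] C) (n : ℕ) (p : Fin n) :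
    (⨂[k] (_ : Fin n), C) →ₗ[k] ⨂[k] (_ : Fin (n + 1)), C :=
  PiTensorProduct.lift (deltaMulti Δ p)

private lemma deltaAt_tprod (Δ : C →ₗ[k] C ⊗[k] C) (p : Fin n) (c : Fin n → C) :
    deltaAt Δ n p (PiTensorProduct.tprod k c) = TensorProduct.lift (insBil p c) (Δ (c p)) :=
  PiTensorProduct.lift.tprod c

private lemma epsAt_tprod (ε : C →ₗ[k] k) (p : Fin (n + 1)) (c : Fin (n + 1) → C) :
    epsAt ε n p (PiTensorProduct.tprod k c) =
      ε (c p) • PiTensorProduct.tprod k (fun j => c (p.succAbove j)) :=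
  PiTensorProduct.lift.tprod c


private lemma ins_comp_succ (p : Fin n) (c : Fin n → C) (u v : C) :
    (fun j => ins p c u v (p.succ.succAbove j)) = Function.update c p u := by
  funext j
  have hs := succAbove_cases p.succ j
  have hp1 : (Fin.succ p).val = p.val + 1 := rfl
  have hjb := j.isLt
  obtain h | h | h : j.val < p.val ∨ j.val = p.val ∨ p.val < j.val := by omega
  · rw [ins_lt (show (p.succ.succAbove j).val < p.val by omega) j (by omega),
      Function.update_of_ne (Fin.ne_of_val_ne (show j.val ≠ p.val by omega))]
  · rw [ins_self (show (p.succ.succAbove j).val = p.val by omega)]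
    obtain rfl : j = p := Fin.ext h
    rw [Function.update_self]
  · rw [ins_gt (show p.val + 1 < (p.succ.succAbove j).val by omega) j (by omega),
      Function.update_of_ne (Fin.ne_of_val_ne (show j.val ≠ p.val by omega))]

private lemma ins_comp_succAbove' {N : ℕ} (p q : Fin (N + 1)) (pN : Fin N)
    (hpN : pN.val = p.val) (h : p.val < q.val) (c : Fin (N + 1) → C) (u v : C) :
    (fun j => ins p c u v (q.succ.succAbove j)) = ins pN (fun j => c (q.succAbove j)) u v := by
  funext j
  have hs := succAbove_cases q.succ j
  have hq1 : (Fin.succ q).val = q.val + 1 := rfl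
  have hjb := j.isLt
  have hqb := q.isLt
  obtain h1 | h1 | h1 | h1 | h1 :
      j.val < p.val ∨ j.val = p.val ∨ j.val = p.val + 1 ∨
        (p.val + 1 < j.val ∧ j.val ≤ q.val) ∨ q.val < j.val := by omega
  · have hjN : j.val < N := by omega
    set jN : Fin N := ⟨j.val, hjN⟩ with hjNd
    have hjNv : jN.val = j.val := rfl
    have hs2 := succAbove_cases q jN
    rw [ins_lt (show (q.succ.succAbove j).val < p.val by omega) (q.succAbove jN) (by omega),
      ins_lt (show j.val < pN.val by omega) jN rfl]
  · rw [ins_self (show (q.succ.succAbove j).val = p.val by omega),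
      ins_self (show j.val = pN.val by omega)]
  · rw [ins_succ (show (q.succ.succAbove j).val = p.val + 1 by omega),
      ins_succ (show j.val = pN.val + 1 by omega)]
  · have hjN : j.val - 1 < N := by omega
    set jN : Fin N := ⟨j.val - 1, hjN⟩ with hjNd
    have hjNv : jN.val = j.val - 1 := rfl
    have hs2 := succAbove_cases q jN
    rw [ins_gt (show p.val + 1 < (q.succ.succAbove j).val by omega) (q.succAbove jN) (by omega),
      ins_gt (show pN.val + 1 < j.val by omega) jN (by omega)]
  · have hjN : j.val - 1 < N := by omega
    set jN : Fin N := ⟨j.val - 1, hjN⟩ with hjNd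
    have hjNv : jN.val = j.val - 1 := rfl
    have hs2 := succAbove_cases q jN
    rw [ins_gt (show p.val + 1 < (q.succ.succAbove j).val by omega) (q.succAbove jN) (by omega),
      ins_gt (show pN.val + 1 < j.val by omega) jN (by omega)]

private lemma eps_delta (ε : C →ₗ[k] k) (Δ : C →ₗ[k] C ⊗[k] C)
    (hr : (TensorProduct.rid k C).toLinearMap ∘ₗ
      TensorProduct.map LinearMap.id ε ∘ₗ Δ = LinearMap.id) (p : Fin n) :
    (epsAt ε n p.succ) ∘ₗ deltaAt Δ n p = LinearMap.id := by
  refine PiTensorProduct.ext (MultilinearMap.ext fun c => ?_)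
  simp only [LinearMap.compMultilinearMap_apply, LinearMap.comp_apply, LinearMap.id_apply,
    deltaAt_tprod]
  have key : (epsAt ε n p.succ) ∘ₗ TensorProduct.lift (insBil p c) =
      ((PiTensorProduct.tprod k (s := fun _ : Fin n => C)).toLinearMap c p) ∘ₗ
        (TensorProduct.rid k C).toLinearMap ∘ₗ TensorProduct.map LinearMap.id ε := by
    refine TensorProduct.ext' fun u v => ?_
    simp only [LinearMap.comp_apply, TensorProduct.lift.tmul, insBil_apply,
      TensorProduct.map_tmul, LinearMap.id_apply, TensorProduct.rid_tmul,
      LinearEquiv.coe_coe, MultilinearMap.toLinearMap_apply]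
    rw [epsAt_tprod, ins_succ (show (Fin.succ p).val = p.val + 1 from rfl), ins_comp_succ,
      MultilinearMap.map_update_smul]
  have happ := LinearMap.congr_fun key (Δ (c p))
  simp only [LinearMap.comp_apply, MultilinearMap.toLinearMap_apply] at happ
  rw [happ]
  have h2 := LinearMap.congr_fun hr (c p)
  simp only [LinearMap.comp_apply, LinearMap.id_apply] at h2
  simp only [LinearEquiv.coe_coe] at h2 ⊢
  rw [h2, Function.update_eq_self]

private lemma eps_delta_comm (ε : C →ₗ[k] k) (Δ : C →ₗ[k] C ⊗[k] C) {N : ℕ}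
    (p q : Fin (N + 1)) (pN : Fin N) (hpN : pN.val = p.val) (h : p.val < q.val) :
    (epsAt ε (N + 1) q.succ) ∘ₗ deltaAt Δ (N + 1) p = (deltaAt Δ N pN) ∘ₗ epsAt ε N q := by
  refine PiTensorProduct.ext (MultilinearMap.ext fun c => ?_)
  simp only [LinearMap.compMultilinearMap_apply, LinearMap.comp_apply, deltaAt_tprod,
    epsAt_tprod, map_smul]
  have hqp : q.succAbove pN = p := by
    have hs := succAbove_cases q pN
    exact Fin.ext (by omega)
  rw [hqp]
  have key : (epsAt ε (N + 1) q.succ) ∘ₗ TensorProduct.lift (insBil p c) =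
      ε (c q) • TensorProduct.lift (insBil pN (fun j => c (q.succAbove j))) := by
    refine TensorProduct.ext' fun u v => ?_
    simp only [LinearMap.comp_apply, TensorProduct.lift.tmul, insBil_apply,
      LinearMap.smul_apply]
    rw [epsAt_tprod, ins_gt (show p.val + 1 < (Fin.succ q).val from Nat.succ_lt_succ h) q rfl,
      ins_comp_succAbove' p q pN hpN h]
  have happ := LinearMap.congr_fun key (Δ (c p))
  simp only [LinearMap.comp_apply, LinearMap.smul_apply] at happ
  rw [happ]

private lemma eps_eps (ε : C →ₗ[k] k) {N : ℕ} (a b' : Fin (N + 1)) (b a' : Fin (N + 2))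
    (ha : a'.val = a.val) (hb : b'.val + 1 = b.val) (h : a.val < b.val) :
    (epsAt ε N a) ∘ₗ epsAt ε (N + 1) b = (epsAt ε N b') ∘ₗ epsAt ε (N + 1) a' := by
  refine PiTensorProduct.ext (MultilinearMap.ext fun c => ?_)
  simp only [LinearMap.compMultilinearMap_apply, LinearMap.comp_apply, epsAt_tprod,
    map_smul, smul_smul]
  have e1 : b.succAbove a = a' := by
    have hs := succAbove_cases b a
    exact Fin.ext (by omega)
  have e2 : a'.succAbove b' = b := by
    have hs := succAbove_cases a' b'
    have hab := a.isLt
    exact Fin.ext (by omega)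
  have e3 : (fun j => c (b.succAbove (a.succAbove j))) =
      fun j => c (a'.succAbove (b'.succAbove j)) := by
    funext j
    congr 1
    have h1 := succAbove_cases a j
    have h2 := succAbove_cases b (a.succAbove j)
    have h3 := succAbove_cases b' j
    have h4 := succAbove_cases a' (b'.succAbove j)
    exact Fin.ext (by omega)
  rw [e3, e1, e2, mul_comm]

end CoTHH

open CoTHH

/-- Let `k` be a field and `(C, Δ, ε)` any counital coassociative `k`-coalgebra.  Then for
every `n ≥ 0` the matching map `σ : coTHH^n(C) = C^{⊗(n+1)} → M_n(coTHH^•(C))`,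
`y ↦ (σ_0 y, …, σ_{n-1} y)`, is surjective (so the cosimplicial cyclic cobar construction of
any counital coalgebra over a field is Reedy fibrant): every family `(x_0, …, x_{n-1})` in the
matching object (i.e. satisfying `σ_i (x_j) = σ_{j-1} (x_i)` for `0 ≤ i < j ≤ n-1`;
note that `σ_i` and `σ_{j-1}` apply the counit in the `(i+1)`-st resp. `j`-th tensor factor)
is of the form `(σ_0 y, …, σ_{n-1} y)`. -/
theorem coTHH_matching_surjective_of_field (k : Type*) [Field k] (C : Type*) [AddCommGroup C]
    [Module k C] (Δ : C →ₗ[k] C ⊗[k] C) (ε : C →ₗ[k] k)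
    (hcoassoc : (TensorProduct.assoc k C C C).toLinearMap ∘ₗ
        TensorProduct.map Δ LinearMap.id ∘ₗ Δ = TensorProduct.map LinearMap.id Δ ∘ₗ Δ)
    (hcounit_l : (TensorProduct.lid k C).toLinearMap ∘ₗ
        TensorProduct.map ε LinearMap.id ∘ₗ Δ = LinearMap.id)
    (hcounit_r : (TensorProduct.rid k C).toLinearMap ∘ₗ
        TensorProduct.map LinearMap.id ε ∘ₗ Δ = LinearMap.id)
    (n : ℕ) (x : Fin n → ⨂[k] (_ : Fin n), C)
    (hx : ∀ i j : Fin n, (h : (i : ℕ) < (j : ℕ)) →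
      epsAt' ε n ⟨(i : ℕ) + 1, by omega⟩ (x j) = epsAt' ε n j (x i)) :
    ∃ y : ⨂[k] (_ : Fin (n + 1)), C, ∀ i : Fin n, epsAt ε n i.succ y = x i := by
  cases n with
  | zero => exact ⟨0, fun i => i.elim0⟩
  | succ N =>
    have hx' : ∀ i j : Fin (N + 1), (i : ℕ) < (j : ℕ) → ∀ i1 : Fin (N + 1),
        i1.val = i.val + 1 → epsAt ε N i1 (x j) = epsAt ε N j (x i) := by
      intro i j hij i1 hi1
      have e : i1 = ⟨(i : ℕ) + 1, by omega⟩ := Fin.ext hi1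
      rw [e]
      exact hx i j hij
    have main : ∀ t : ℕ, ∃ y : ⨂[k] (_ : Fin (N + 2)), C,
        ∀ i : Fin (N + 1), N + 1 - t ≤ i.val → epsAt ε (N + 1) i.succ y = x i := by
      intro t
      induction t with
      | zero => exact ⟨0, fun i hi => absurd hi (by have := i.isLt; omega)⟩
      | succ t ih =>
        obtain ⟨y, hy⟩ := ih
        rcases Nat.lt_or_ge t (N + 1) with ht | ht
        · set m : Fin (N + 1) := ⟨N - t, by omega⟩ with hmdef
          have hmv : m.val = N - t := rfl
          refine ⟨y + deltaAt Δ (N + 1) m (x m - epsAt ε (N + 1) m.succ y), ?_⟩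
          intro i hi
          have hib := i.isLt
          rcases Nat.lt_or_ge m.val i.val with him | him
          · have hyi : epsAt ε (N + 1) i.succ y = x i := hy i (by omega)
            have hmN : m.val < N := by omega
            set mN : Fin N := ⟨m.val, hmN⟩ with hmNdef
            set m1 : Fin (N + 1) := ⟨m.val + 1, by omega⟩ with hm1def
            have hm1v : m1.val = m.val + 1 := rfl
            rw [map_add, hyi]
            have hB := LinearMap.congr_fun
              (eps_delta_comm ε Δ m i mN rfl him) (x m - epsAt ε (N + 1) m.succ y)
            simp only [LinearMap.comp_apply] at hB
            rw [hB]
            have hz : epsAt ε N i (x m - epsAt ε (N + 1) m.succ y) = 0 := by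
              rw [map_sub]
              have h1 : epsAt ε N i (x m) = epsAt ε N m1 (x i) := (hx' m i him m1 rfl).symm
              have h2 : epsAt ε N i (epsAt ε (N + 1) m.succ y) =
                  epsAt ε N m1 (epsAt ε (N + 1) i.succ y) := by
                have hC := LinearMap.congr_fun
                  (eps_eps ε m1 i i.succ m.succ rfl rfl
                    (show m.val + 1 < i.val + 1 by omega)) y
                simp only [LinearMap.comp_apply] at hC
                exact hC.symm
              rw [h1, h2, hyi, sub_self]
            rw [hz, map_zero, add_zero]
          · obtain rfl : i = m := Fin.ext (by omega)
            rw [map_add]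
            have hA := LinearMap.congr_fun
              (eps_delta ε Δ hcounit_r m) (x m - epsAt ε (N + 1) m.succ y)
            simp only [LinearMap.comp_apply, LinearMap.id_apply] at hA
            rw [hA]
            abel
        · exact ⟨y, fun i hi => hy i (by omega)⟩
    obtain ⟨y, hy⟩ := main (N + 1)
    exact ⟨y, fun i => hy i (by omega)⟩
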